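/- Suppose π_ω^mo = π_ω^p = π_ω^c for all ω ∈ Ω, and suppose (p*, r*, d*, l*, λ*) satisfies: (p*, r*) maximizes the producer objective J^p over 𝒪, (d*, l*) maximizes the consumer objective J^c over 𝒦, and for every ω the complementarity condition 0 ≤ p* + r*_ω + ξ_ω − d* − l*_ω ⊥ λ*_ω ≥ 0 holds. Then (p*, r*, d*, l*) is an optimal solution of the centralized problem: maximize [u(d) − c(p)] + Σ_ω π_ω^mo[u(l_ω) − c(r_ω)] subject to p + r_ω + ξ_ω − d − l_ω ≥ 0 for all ω and (p, r_ω) ∈ 𝒪, (d, l_ω) ∈ 𝒦, with λ* an optimal dual multiplier vector. -/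
import Mathlib


theorem equilibrium_solves_centralized_problem (Ω : Type*) [Fintype Ω]
    (α β γ : ℝ) (hα : 0 < α) (hβ : 0 < β) (hγ : 0 < γ)
    (c u : ℝ → ℝ)
    (hc : c = fun x => (1/2) * α * x ^ 2)
    (hu : u = fun x => γ * x - (1/2) * β * x ^ 2)
    (O K : Set (ℝ × (Ω → ℝ)))
    (hOne : O.Nonempty) (hOcpt : IsCompact O) (hOconv : Convex ℝ O)
    (hKne : K.Nonempty) (hKcpt : IsCompact K) (hKconv : Convex ℝ K)
    (πmo πp πc : Ω → ℝ) (hπ : ∀ ω, πmo ω = πp ω ∧ πmo ω = πc ω)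
    (ξ : Ω → ℝ) (lamStar : Ω → ℝ)
    (pStar dStar : ℝ) (rStar lStar : Ω → ℝ)
    (hpO : (pStar, rStar) ∈ O) (hdK : (dStar, lStar) ∈ K)
    (hprod : ∀ pr ∈ O, ∑ ω, lamStar ω * (pr.1 + pr.2 ω) - ∑ ω, πp ω * c (pr.2 ω) - c pr.1
      ≤ ∑ ω, lamStar ω * (pStar + rStar ω) - ∑ ω, πp ω * c (rStar ω) - c pStar)
    (hcons : ∀ dl ∈ K, ∑ ω, πc ω * u (dl.2 ω) - ∑ ω, lamStar ω * (dl.1 + dl.2 ω) + u dl.1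
      ≤ ∑ ω, πc ω * u (lStar ω) - ∑ ω, lamStar ω * (dStar + lStar ω) + u dStar)
    (hfeas : ∀ ω, 0 ≤ pStar + rStar ω + ξ ω - dStar - lStar ω)
    (hdual : ∀ ω, 0 ≤ lamStar ω)
    (hcomp : ∀ ω, lamStar ω * (pStar + rStar ω + ξ ω - dStar - lStar ω) = 0) :
    ∀ p d : ℝ, ∀ r l : Ω → ℝ, (p, r) ∈ O → (d, l) ∈ K →
      (∀ ω, 0 ≤ p + r ω + ξ ω - d - l ω) →
      (u d - c p) + ∑ ω, πmo ω * (u (l ω) - c (r ω))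
        ≤ (u dStar - c pStar) + ∑ ω, πmo ω * (u (lStar ω) - c (rStar ω)) := by
  intro p d r l hO hK hf
  have h1 := hprod (p, r) hO
  have h2 := hcons (d, l) hK
  simp only at h1 h2
  have e : ∀ (l r : Ω → ℝ), ∑ ω, πmo ω * (u (l ω) - c (r ω))
      = ∑ ω, πc ω * u (l ω) - ∑ ω, πp ω * c (r ω) := by
    intro l r
    rw [← Finset.sum_sub_distrib]
    exact Finset.sum_congr rfl fun ω _ => by rw [← (hπ ω).1, ← (hπ ω).2]; ring
  have id : ∀ (p d : ℝ) (r l : Ω → ℝ),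
      ∑ ω, lamStar ω * (p + r ω + ξ ω - d - l ω)
      = ∑ ω, lamStar ω * (p + r ω) - ∑ ω, lamStar ω * (d + l ω)
        + ∑ ω, lamStar ω * ξ ω := by
    intro p d r l
    rw [← Finset.sum_sub_distrib, ← Finset.sum_add_distrib]
    exact Finset.sum_congr rfl fun ω _ => by ring
  have hA : 0 ≤ ∑ ω, lamStar ω * (p + r ω + ξ ω - d - l ω) :=
    Finset.sum_nonneg fun ω _ => mul_nonneg (hdual ω) (hf ω)
  have hB : ∑ ω, lamStar ω * (pStar + rStar ω + ξ ω - dStar - lStar ω) = 0 :=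
    Finset.sum_eq_zero fun ω _ => hcomp ω
  rw [e, e]
  have idA := id p d r l
  have idB := id pStar dStar rStar lStar
  linarith
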